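/- Let γ > 2. Then λ̄'_γ(F) = 0; equivalently, for every μ > 0 there is no C² function u : (0,1) → ℝ with u > 0 on (0,1) satisfying F(D(u''(r), u'(r)/r)) + μ·u(r)·r^{−γ} ≤ 0 for all r ∈ (0,1). -/

import Mathlib

open Set Real Filter MeasureTheory Matrix
open Topology

noncomputable section

/-- The `N × N` diagonal matrix with first diagonal entry `a` and the remaining
`N - 1` diagonal entries equal to `b`. -/
def Dmat (N : ℕ) (a b : ℝ) : Matrix (Fin N) (Fin N) ℝ :=
  Matrix.diagonal (fun i => if (i : ℕ) = 0 then a else b)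

/-- Uniform ellipticity with constants `0 < lam ≤ Lam`. -/
def UnifElliptic (N : ℕ) (lam Lam : ℝ) (F : Matrix (Fin N) (Fin N) ℝ → ℝ) : Prop :=
  ∀ M P : Matrix (Fin N) (Fin N) ℝ, M.IsSymm → P.PosSemidef →
    lam * P.trace ≤ F (M + P) - F M ∧ F (M + P) - F M ≤ Lam * P.trace

/-- Rotation invariance. -/
def RotInvariant (N : ℕ) (F : Matrix (Fin N) (Fin N) ℝ → ℝ) : Prop :=
  ∀ O M : Matrix (Fin N) (Fin N) ℝ, Oᵀ * O = 1 → F (Oᵀ * M * O) = F M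

/-- Positive one-homogeneity. -/
def PosHomog (N : ℕ) (F : Matrix (Fin N) (Fin N) ℝ → ℝ) : Prop :=
  ∀ t : ℝ, 0 < t → ∀ M : Matrix (Fin N) (Fin N) ℝ, F (t • M) = t * F M

/-- The radial principal eigenvalue `λ̄'_γ(F)` on the punctured unit ball. -/
def radialEV (N : ℕ) (F : Matrix (Fin N) (Fin N) ℝ → ℝ) (γ : ℝ) : ℝ :=
  sSup {μ : ℝ | ∃ u : ℝ → ℝ, ContDiffOn ℝ 2 u (Ioo 0 1) ∧
    (∀ r ∈ Ioo (0:ℝ) 1, 0 < u r) ∧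
    (∀ r ∈ Ioo (0:ℝ) 1,
      F (Dmat N (deriv (deriv u) r) (deriv u r / r)) + μ * u r * r ^ (-γ) ≤ 0)}


section AuxLemmas

lemma Dmat_add (N : ℕ) (a b a' b' : ℝ) :
    Dmat N a b + Dmat N a' b' = Dmat N (a + a') (b + b') := by
  unfold Dmat
  have h : (fun i : Fin N => (if (i : ℕ) = 0 then a else b) + (if (i : ℕ) = 0 then a' else b'))
      = fun i : Fin N => if (i : ℕ) = 0 then a + a' else b + b' := by
    funext i; by_cases h : (i : ℕ) = 0 <;> simp [h]
  rw [Matrix.diagonal_add, h]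
lemma Dmat_zero (N : ℕ) : Dmat N 0 0 = 0 := by
  unfold Dmat
  have : (fun i : Fin N => if (i : ℕ) = 0 then (0:ℝ) else 0) = fun _ => 0 := by
    funext i; split <;> rfl
  rw [this, Matrix.diagonal_zero]
lemma Dmat_isSymm (N : ℕ) (a b : ℝ) : (Dmat N a b).IsSymm := Matrix.isSymm_diagonal _
lemma Dmat_posSemidef {N : ℕ} {a b : ℝ} (ha : 0 ≤ a) (hb : 0 ≤ b) :
    (Dmat N a b).PosSemidef := by
  refine Matrix.posSemidef_diagonal_iff.mpr fun i => ?_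
  split <;> assumption
lemma Dmat_trace (N : ℕ) (hN : 1 ≤ N) (a b : ℝ) :
    (Dmat N a b).trace = a + ((N : ℝ) - 1) * b := by
  obtain ⟨M, rfl⟩ : ∃ M, N = M + 1 := ⟨N - 1, by omega⟩
  unfold Dmat
  rw [Matrix.trace_diagonal, Fin.sum_univ_succ]
  simp only [Fin.val_zero, if_true, Fin.val_succ, Nat.succ_ne_zero, if_false,
    Finset.sum_const, Finset.card_univ, Fintype.card_fin, nsmul_eq_mul]
  push_cast
  ring

section Pucci
variable {N : ℕ} {lam Lam : ℝ} {F : Matrix (Fin N) (Fin N) ℝ → ℝ}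

lemma F_zero (hF3 : PosHomog N F) : F 0 = 0 := by
  have h := hF3 2 (by norm_num) 0
  rw [smul_zero] at h; linarith

/-- lower bound in the (≤0, ≤0) quadrant -/
lemma F_neg_neg (hN : 1 ≤ N) (hF1 : UnifElliptic N lam Lam F) (hF3 : PosHomog N F)
    {a b : ℝ} (ha : a ≤ 0) (hb : b ≤ 0) :
    Lam * (a + ((N : ℝ) - 1) * b) ≤ F (Dmat N a b) := by
  have h := (hF1 (Dmat N a b) (Dmat N (-a) (-b)) (Dmat_isSymm N a b)
    (Dmat_posSemidef (by linarith) (by linarith))).2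
  rw [Dmat_add, add_neg_cancel, add_neg_cancel, Dmat_zero, F_zero hF3,
    Dmat_trace N hN] at h
  nlinarith [h]

/-- lower bound in the (≥0, ≥0) quadrant -/
lemma F_pos_pos (hN : 1 ≤ N) (hF1 : UnifElliptic N lam Lam F) (hF3 : PosHomog N F)
    {a b : ℝ} (ha : 0 ≤ a) (hb : 0 ≤ b) :
    lam * (a + ((N : ℝ) - 1) * b) ≤ F (Dmat N a b) := by
  have h := (hF1 0 (Dmat N a b) (by rw [← Dmat_zero N]; exact Dmat_isSymm N 0 0)
    (Dmat_posSemidef ha hb)).1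
  rw [zero_add, F_zero hF3, sub_zero, Dmat_trace N hN] at h
  exact h

/-- lower bound for (≥0, ≤0) -/
lemma F_pos_neg (hN : 1 ≤ N) (hF1 : UnifElliptic N lam Lam F) (hF3 : PosHomog N F)
    {a b : ℝ} (ha : 0 ≤ a) (hb : b ≤ 0) :
    lam * a + Lam * (((N : ℝ) - 1) * b) ≤ F (Dmat N a b) := by
  have h := (hF1 (Dmat N 0 b) (Dmat N a 0) (Dmat_isSymm N 0 b)
    (Dmat_posSemidef ha le_rfl)).1
  rw [Dmat_add, zero_add, add_zero, Dmat_trace N hN] at h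
  have h2 := F_neg_neg hN hF1 hF3 (le_refl (0:ℝ)) hb
  rw [zero_add] at h2
  nlinarith [h, h2]

/-- lower bound for (≤0, ≥0) -/
lemma F_neg_pos (hN : 1 ≤ N) (hlam : 0 < lam) (hF1 : UnifElliptic N lam Lam F)
    (hF3 : PosHomog N F) {a b : ℝ} (ha : a ≤ 0) (hb : 0 ≤ b) :
    Lam * a ≤ F (Dmat N a b) := by
  have h := (hF1 (Dmat N a 0) (Dmat N 0 b) (Dmat_isSymm N a 0)
    (Dmat_posSemidef le_rfl hb)).1
  rw [Dmat_add, add_zero, zero_add, Dmat_trace N hN] at h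
  have h2 := F_neg_neg hN hF1 hF3 ha (le_refl (0:ℝ))
  rw [mul_zero, add_zero] at h2
  have hN1 : (1 : ℝ) ≤ (N : ℝ) := by exact_mod_cast hN
  nlinarith [h, h2, mul_nonneg (mul_nonneg hlam.le (by linarith : (0:ℝ) ≤ (N:ℝ) - 1)) hb]
end Pucci

end AuxLemmas

lemma exp_pow_aux (n : ℕ) (hn : 1 ≤ n) {x : ℝ} (hx : 0 ≤ x) : (x / n) ^ n ≤ Real.exp x := by
  have hn0 : (0:ℝ) < n := by exact_mod_cast hn
  have h1 : x / n ≤ Real.exp (x / n) := by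
    have := Real.add_one_le_exp (x / n); linarith
  calc (x / n) ^ n ≤ Real.exp (x / n) ^ n := pow_le_pow_left₀ (by positivity) h1 n
    _ = Real.exp (n * (x / n)) := (Real.exp_nat_mul _ n).symm
    _ = Real.exp x := by rw [mul_div_cancel₀ _ (ne_of_gt hn0)]

set_option maxHeartbeats 4000000 in
lemma noSuper (N : ℕ) (hN : 2 ≤ N) (lam Lam : ℝ) (hlam : 0 < lam) (hlL : lam ≤ Lam)
    (F : Matrix (Fin N) (Fin N) ℝ → ℝ)
    (hF1 : UnifElliptic N lam Lam F) (hF3 : PosHomog N F)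
    (γ : ℝ) (hγ : 2 < γ) (μ : ℝ) (hμ : 0 < μ)
    (u : ℝ → ℝ) (hu : ContDiffOn ℝ 2 u (Ioo 0 1))
    (hpos : ∀ r ∈ Ioo (0:ℝ) 1, 0 < u r)
    (hineq : ∀ r ∈ Ioo (0:ℝ) 1,
      F (Dmat N (deriv (deriv u) r) (deriv u r / r)) + μ * u r * r ^ (-γ) ≤ 0) : False := by
  have hN1 : 1 ≤ N := by omega
  have hLam : 0 < Lam := lt_of_lt_of_le hlam hlL
  have hNR : (1:ℝ) ≤ (N:ℝ) - 1 := by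
    have h : (2:ℝ) ≤ (N:ℝ) := by exact_mod_cast hN
    linarith
  have hIopen : IsOpen (Ioo (0:ℝ) 1) := isOpen_Ioo
  have hu1 : ∀ r ∈ Ioo (0:ℝ) 1, HasDerivAt u (deriv u r) r := by
    intro r hr
    exact ((hu.contDiffAt (hIopen.mem_nhds hr)).differentiableAt (by norm_num)).hasDerivAt
  have hdc : ContDiffOn ℝ 1 (deriv u) (Ioo (0:ℝ) 1) := hu.deriv_of_isOpen hIopen (by norm_num)
  have hu2 : ∀ r ∈ Ioo (0:ℝ) 1, HasDerivAt (deriv u) (deriv (deriv u) r) r := by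
    intro r hr
    exact ((hdc.contDiffAt (hIopen.mem_nhds hr)).differentiableAt (by norm_num)).hasDerivAt
  have hu'cont : ContinuousOn (deriv u) (Ioo (0:ℝ) 1) := hdc.continuousOn
  have hucont : ContinuousOn u (Ioo (0:ℝ) 1) := hu.continuousOn
  have hKpos : ∀ r ∈ Ioo (0:ℝ) 1, 0 < μ * u r * r ^ (-γ) := fun r hr =>
    mul_pos (mul_pos hμ (hpos r hr)) (Real.rpow_pos_of_pos hr.1 _)
  -- pointwise consequence when u' ≥ 0
  have hP1 : ∀ r ∈ Ioo (0:ℝ) 1, 0 ≤ deriv u r →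
      μ * u r * r ^ (-γ) ≤ Lam * (-(deriv (deriv u) r)) := by
    intro r hr hd
    have hKr := hKpos r hr
    have hb : 0 ≤ deriv u r / r := div_nonneg hd hr.1.le
    have hFr := hineq r hr
    rcases le_or_gt 0 (deriv (deriv u) r) with hA | hA
    · exfalso
      have h6 := F_pos_pos hN1 hF1 hF3 hA hb
      nlinarith [mul_nonneg hlam.le (add_nonneg hA (mul_nonneg (by linarith : (0:ℝ) ≤ (N:ℝ)-1) hb))]
    · have h9 := F_neg_pos hN1 hlam hF1 hF3 hA.le hb
      nlinarith
  set k' : ℝ := max (Lam / lam * ((N:ℝ)-1)) γ with hk'def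
  have hk'k : Lam / lam * ((N:ℝ)-1) ≤ k' := le_max_left _ _
  have hk'γ : γ ≤ k' := le_max_right _ _
  have hk'N : (N:ℝ) - 1 ≤ k' := by
    refine le_trans ?_ hk'k
    have h1 : (1:ℝ) ≤ Lam / lam := (one_le_div hlam).mpr hlL
    nlinarith
  have hk'pos : 0 < k' := by linarith
  -- pointwise consequence when u' < 0
  have hP2 : ∀ r ∈ Ioo (0:ℝ) 1, deriv u r < 0 →
      μ * u r * r ^ (-γ) ≤ Lam * (-(deriv (deriv u) r) + k' * (-(deriv u r)) / r) := by
    intro r hr hd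
    have hKr := hKpos r hr
    have hb : deriv u r / r < 0 := div_neg_of_neg_of_pos hd hr.1
    have hFr := hineq r hr
    have key : μ * u r * r ^ (-γ) ≤
        Lam * (-(deriv (deriv u) r) - k' * (deriv u r / r)) := by
      rcases le_or_gt 0 (deriv (deriv u) r) with hA | hA
      · have h8 := F_pos_neg hN1 hF1 hF3 hA hb.le
        have hkk : Lam * ((N:ℝ)-1) ≤ lam * k' := by
          rw [div_mul_eq_mul_div, div_le_iff₀ hlam] at hk'k
          linarith
        have h2 : μ * u r * r ^ (-γ) ≤ lam * (-(deriv (deriv u) r) - k' * (deriv u r / r)) := by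
          nlinarith [mul_nonneg (neg_nonneg.mpr hb.le) (sub_nonneg.mpr hkk)]
        have h3 : 0 ≤ -(deriv (deriv u) r) - k' * (deriv u r / r) := by nlinarith
        nlinarith [mul_le_mul_of_nonneg_right hlL h3]
      · have h7 := F_neg_neg hN1 hF1 hF3 hA.le hb.le
        nlinarith [mul_nonneg (mul_nonneg hLam.le (sub_nonneg.mpr hk'N)) (neg_nonneg.mpr hb.le)]
    have e : -(deriv (deriv u) r) + k' * (-(deriv u r)) / r
        = -(deriv (deriv u) r) - k' * (deriv u r / r) := by ring
    rw [e]
    exact key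
  by_cases hcase : ∃ r₀ ∈ Ioo (0:ℝ) 1, ∀ s ∈ Ioo (0:ℝ) r₀, 0 ≤ deriv u s
  · -- Case 1 : u' ≥ 0 near the origin
    obtain ⟨r₀, hr₀, hge⟩ := hcase
    have hJI : Ioo (0:ℝ) r₀ ⊆ Ioo (0:ℝ) 1 := fun x hx => ⟨hx.1, hx.2.trans hr₀.2⟩
    have hdd : ∀ x ∈ Ioo (0:ℝ) r₀, deriv (deriv u) x < 0 := by
      intro x hx
      have h := hP1 x (hJI hx) (hge x hx)
      nlinarith [hKpos x (hJI hx)]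
    have humono : MonotoneOn u (Ioo (0:ℝ) r₀) := by
      apply monotoneOn_of_deriv_nonneg (convex_Ioo _ _) (hucont.mono hJI)
      · rw [isOpen_Ioo.interior_eq]
        exact fun x hx => ((hu1 x (hJI hx)).differentiableAt).differentiableWithinAt
      · rw [isOpen_Ioo.interior_eq]; exact fun x hx => hge x hx
    have hdanti : AntitoneOn (deriv u) (Ioo (0:ℝ) r₀) := by
      apply antitoneOn_of_deriv_nonpos (convex_Ioo _ _) (hu'cont.mono hJI)
      · rw [isOpen_Ioo.interior_eq]
        exact fun x hx => ((hu2 x (hJI hx)).differentiableAt).differentiableWithinAt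
      · rw [isOpen_Ioo.interior_eq]; exact fun x hx => (hdd x hx).le
    -- upper bound on u' from positivity of u
    have hc : ∀ s ∈ Ioo (0:ℝ) r₀, deriv u s * (s/2) ≤ u s := by
      intro s hs
      have hs2 : s/2 ∈ Ioo (0:ℝ) r₀ := ⟨by linarith [hs.1], by linarith [hs.1, hs.2]⟩
      have hsub : Icc (s/2) s ⊆ Ioo (0:ℝ) r₀ :=
        fun x hx => ⟨lt_of_lt_of_le hs2.1 hx.1, lt_of_le_of_lt hx.2 hs.2⟩
      have hψ : MonotoneOn (fun x => u x - deriv u s * x) (Icc (s/2) s) := by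
        apply monotoneOn_of_deriv_nonneg (convex_Icc _ _)
        · exact (hucont.mono (hsub.trans hJI)).sub (continuousOn_const.mul continuousOn_id)
        · rw [interior_Icc]
          intro x hx
          exact ((hu1 x (hJI (hsub (Ioo_subset_Icc_self hx)))).sub
            ((hasDerivAt_id' x).const_mul (deriv u s))).differentiableAt.differentiableWithinAt
        · rw [interior_Icc]
          intro x hx
          have hxJ := hsub (Ioo_subset_Icc_self hx)
          rw [HasDerivAt.deriv (f := fun x => u x - deriv u s * x) ((hu1 x (hJI hxJ)).sub ((hasDerivAt_id' x).const_mul (deriv u s)))]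
          have := hdanti hxJ hs (le_of_lt hx.2)
          simp only [mul_one]
          linarith
      have h2 := hψ (left_mem_Icc.mpr (by linarith [hs.1])) (right_mem_Icc.mpr (by linarith [hs.1]))
        (by linarith [hs.1])
      dsimp only at h2
      have h3 := hpos _ (hJI hs2)
      nlinarith
    -- lower bound on u' from the equation
    set C2 : ℝ := μ / (Lam * (γ - 1)) with hC2def
    have hC2 : 0 < C2 := by rw [hC2def]; exact div_pos hμ (mul_pos hLam (by linarith))
    have hd4 : ∀ s ∈ Ioo (0:ℝ) (r₀/4), C2 / 2 * u s * s ^ (1-γ) ≤ deriv u s := by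
      intro s hs
      have hr₀0 := hr₀.1
      have ht : r₀/2 ∈ Ioo (0:ℝ) r₀ := ⟨by linarith, by linarith⟩
      have hsJ : s ∈ Ioo (0:ℝ) r₀ := ⟨hs.1, by linarith [hs.2]⟩
      have hsub : Icc s (r₀/2) ⊆ Ioo (0:ℝ) r₀ :=
        fun x hx => ⟨lt_of_lt_of_le hs.1 hx.1, lt_of_le_of_lt hx.2 ht.2⟩
      have hφd : ∀ x ∈ Ioo (0:ℝ) r₀, HasDerivAt (fun y => deriv u y - C2 * u s * y ^ (1-γ))
          (deriv (deriv u) x - C2 * u s * ((1-γ) * x ^ (1-γ-1))) x := by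
        intro x hx
        exact (hu2 x (hJI hx)).sub
          ((Real.hasDerivAt_rpow_const (Or.inl (ne_of_gt hx.1))).const_mul (C2 * u s))
      have hφ : AntitoneOn (fun y => deriv u y - C2 * u s * y ^ (1-γ)) (Icc s (r₀/2)) := by
        apply antitoneOn_of_deriv_nonpos (convex_Icc _ _)
        · apply ContinuousOn.sub (hu'cont.mono (hsub.trans hJI))
          exact continuousOn_const.mul (fun x hx =>
            ((Real.hasDerivAt_rpow_const (Or.inl (ne_of_gt (hsub hx).1))).continuousAt.continuousWithinAt))
        · rw [interior_Icc]
          exact fun x hx => (hφd x (hsub (Ioo_subset_Icc_self hx))).differentiableAt.differentiableWithinAt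
        · rw [interior_Icc]
          intro x hx
          have hxJ := hsub (Ioo_subset_Icc_self hx)
          rw [(hφd x hxJ).deriv]
          have h1 := hP1 x (hJI hxJ) (hge x hxJ)
          have hux : u s ≤ u x := humono hsJ hxJ hx.1.le
          rw [show (1:ℝ)-γ-1 = -γ from by ring]
          have hxp : (0:ℝ) < x ^ (-γ) := Real.rpow_pos_of_pos hxJ.1 _
          have h1' : μ * u x * x ^ (-γ) / Lam ≤ -(deriv (deriv u) x) :=
            (div_le_iff₀ hLam).mpr (by nlinarith [h1])
          have hγ1 : γ - (1:ℝ) ≠ 0 := ne_of_gt (by linarith)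
          have e : C2 * u s * ((1-γ) * x ^ (-γ)) = -(μ / Lam * u s * x ^ (-γ)) := by
            rw [hC2def]; field_simp; ring
          have h5 : μ / Lam * u s * x ^ (-γ) ≤ μ / Lam * u x * x ^ (-γ) :=
            mul_le_mul_of_nonneg_right
              (mul_le_mul_of_nonneg_left hux (div_nonneg hμ.le hLam.le)) hxp.le
          have h6 : μ / Lam * u x * x ^ (-γ) = μ * u x * x ^ (-γ) / Lam := by ring
          linarith
      have hsle : s ≤ r₀/2 := by linarith [hs.2, hr₀.1]
      have h6 := hφ (left_mem_Icc.mpr hsle) (right_mem_Icc.mpr hsle) hsle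
      dsimp only at h6
      have h7 : 0 ≤ deriv u (r₀/2) := hge _ ht
      -- (r₀/2)^{1-γ} ≤ (1/2) * s^{1-γ}
      have h8 : ((r₀:ℝ)/2) ^ (1-γ) ≤ (2*s) ^ (1-γ) :=
        Real.rpow_le_rpow_of_nonpos (by linarith [hs.1]) (by linarith [hs.2]) (by linarith)
      have h9 : ((2:ℝ)*s) ^ (1-γ) = 2 ^ (1-γ) * s ^ (1-γ) :=
        Real.mul_rpow (by norm_num) hs.1.le
      have h10 : (2:ℝ) ^ (1-γ) ≤ 1/2 := by
        have := Real.rpow_le_rpow_of_exponent_le (one_le_two) (show (1:ℝ)-γ ≤ -1 by linarith)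
        rwa [Real.rpow_neg_one, show ((2:ℝ))⁻¹ = 1/2 by norm_num] at this
      have h11 : ((r₀:ℝ)/2) ^ (1-γ) ≤ 1/2 * s ^ (1-γ) := by
        have hsp : (0:ℝ) ≤ s ^ (1-γ) := Real.rpow_nonneg hs.1.le _
        nlinarith
      have h12 : C2 * u s * ((r₀/2) ^ (1-γ)) ≤ C2 * u s * (1/2 * s ^ (1-γ)) :=
        mul_le_mul_of_nonneg_left h11 (mul_nonneg hC2.le (hpos s (hJI hsJ)).le)
      nlinarith [h6, h7, h12]
    -- contradiction for small s
    have hε : (0:ℝ) < γ - 2 := by linarith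
    set B : ℝ := (C2/16) ^ (γ-2)⁻¹ with hBdef
    have hB : 0 < B := by rw [hBdef]; exact Real.rpow_pos_of_pos (by positivity) _
    set s : ℝ := min (r₀/8) B with hsdef
    have hs0 : 0 < s := lt_min (by linarith [hr₀.1]) hB
    have hsmem : s ∈ Ioo (0:ℝ) (r₀/4) :=
      ⟨hs0, lt_of_le_of_lt (min_le_left _ _) (by linarith [hr₀.1])⟩
    have hsJ : s ∈ Ioo (0:ℝ) r₀ := ⟨hs0, by linarith [hsmem.2, hr₀.1]⟩
    have h1 := hd4 s hsmem
    have h2 := hc s hsJ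
    have h3 : C2 / 2 * u s * s ^ (1-γ) * (s/2) ≤ u s :=
      le_trans (mul_le_mul_of_nonneg_right h1 (by linarith [hs0] : (0:ℝ) ≤ s/2)) h2
    have hss : s ^ (1-γ) * s = s ^ (2-γ) := by
      rw [show (2:ℝ)-γ = (1-γ)+1 from by ring, Real.rpow_add_one hs0.ne']
    have h4 : C2 / 4 * s ^ (2-γ) ≤ 1 := by
      have hus := hpos s (hJI hsJ)
      have e : C2 / 2 * u s * s ^ (1-γ) * (s/2) = C2 / 4 * s ^ (2-γ) * u s := by
        rw [← hss]; ring
      rw [e] at h3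
      by_contra hcon
      push_neg at hcon
      nlinarith [h3, hus]
    have h5 : s ^ (2-γ) = (s ^ (γ-2))⁻¹ := by
      rw [show (2:ℝ)-γ = -(γ-2) from by ring, Real.rpow_neg hs0.le]
    have hsp : 0 < s ^ (γ-2) := Real.rpow_pos_of_pos hs0 _
    have h6 : C2 / 4 ≤ s ^ (γ-2) := by
      rw [h5] at h4
      have := mul_le_mul_of_nonneg_right h4 hsp.le
      rw [one_mul, mul_assoc, inv_mul_cancel₀ hsp.ne', mul_one] at this
      exact this
    have h7 : s ^ (γ-2) ≤ C2/16 := by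
      calc s ^ (γ-2) ≤ B ^ (γ-2) := Real.rpow_le_rpow hs0.le (min_le_right _ _) hε.le
        _ = C2/16 := by rw [hBdef]; exact Real.rpow_inv_rpow (by positivity) hε.ne'
    linarith
  · -- Case 2 : u' < 0 everywhere
    push_neg at hcase
    have hneg : ∀ r ∈ Ioo (0:ℝ) 1, deriv u r < 0 := by
      intro b hb
      by_contra hge0
      push_neg at hge0
      obtain ⟨sx, hsx, hsxneg⟩ := hcase b hb
      have hIccI : Icc sx b ⊆ Ioo (0:ℝ) 1 :=
        fun x hx => ⟨lt_of_lt_of_le hsx.1 hx.1, lt_of_le_of_lt hx.2 hb.2⟩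
      have hAclosed : IsClosed (Icc sx b ∩ (deriv u) ⁻¹' (Ici 0)) :=
        (hu'cont.mono hIccI).preimage_isClosed_of_isClosed isClosed_Icc isClosed_Ici
      have hAne : (Icc sx b ∩ (deriv u) ⁻¹' (Ici 0)).Nonempty :=
        ⟨b, ⟨hsx.2.le, le_rfl⟩, hge0⟩
      have hAbdd : BddBelow (Icc sx b ∩ (deriv u) ⁻¹' (Ici 0)) :=
        (bddBelow_Icc).mono inter_subset_left
      set c := sInf (Icc sx b ∩ (deriv u) ⁻¹' (Ici 0)) with hcdef
      have hcA : c ∈ Icc sx b ∩ (deriv u) ⁻¹' (Ici 0) := hAclosed.csInf_mem hAne hAbdd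
      have hcs : sx < c := by
        rcases lt_or_eq_of_le hcA.1.1 with h | h
        · exact h
        · exfalso; rw [← h] at hcA; exact absurd hcA.2 (not_le.mpr hsxneg)
      have hlow : ∀ x ∈ Ico sx c, deriv u x < 0 := by
        intro x hx
        by_contra hxx
        push_neg at hxx
        have hxA : x ∈ Icc sx b ∩ (deriv u) ⁻¹' (Ici 0) :=
          ⟨⟨hx.1, le_trans hx.2.le hcA.1.2⟩, hxx⟩
        exact absurd (csInf_le hAbdd hxA) (not_le.mpr hx.2)
      have hcI : c ∈ Ioo (0:ℝ) 1 := hIccI hcA.1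
      have hddc : deriv (deriv u) c < 0 := by
        have h := hP1 c hcI hcA.2
        nlinarith [hKpos c hcI]
      have hslope := hasDerivAt_iff_tendsto_slope.mp (hu2 c hcI)
      have h1 : ∀ᶠ x in 𝓝[≠] c, slope (deriv u) c x < 0 :=
        hslope.eventually_lt_const hddc
      have h2 : ∀ᶠ x in 𝓝[<] c, slope (deriv u) c x < 0 :=
        h1.filter_mono (nhdsWithin_mono c (fun x hx => ne_of_lt hx))
      have h3 : Ioo sx c ∈ 𝓝[<] c := Ioo_mem_nhdsLT_of_mem ⟨hcs, le_rfl⟩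
      obtain ⟨x, hx1, hx2⟩ := (h2.and (eventually_of_mem h3 (fun x hx => hx))).exists
      rw [slope_def_field] at hx1
      rcases div_neg_iff.mp hx1 with ⟨hnum, hden⟩ | ⟨hnum, hden⟩
      · have := hlow x ⟨hx2.1.le, hx2.2⟩
        have hc0 : (0:ℝ) ≤ deriv u c := hcA.2
        linarith
      · linarith [hx2.2]
    -- u is strictly decreasing; exponential lower bound machinery
    have huanti : AntitoneOn u (Ioo (0:ℝ) 1) := by
      apply antitoneOn_of_deriv_nonpos (convex_Ioo _ _) hucont
      · rw [isOpen_Ioo.interior_eq]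
        exact fun x hx => ((hu1 x hx).differentiableAt).differentiableWithinAt
      · rw [isOpen_Ioo.interior_eq]; exact fun x hx => (hneg x hx).le
    set G : ℝ → ℝ := fun r => r ^ k' * -(deriv u r) with hGdef
    have hG' : ∀ r ∈ Ioo (0:ℝ) 1,
        HasDerivAt G (k' * r ^ (k'-1) * -(deriv u r) + r ^ k' * -(deriv (deriv u) r)) r := by
      intro r hr
      have h1 : HasDerivAt (fun x : ℝ => x ^ k') (k' * r ^ (k'-1)) r :=
        Real.hasDerivAt_rpow_const (Or.inl hr.1.ne')
      rw [hGdef]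
      exact h1.mul (hu2 r hr).neg
    have hGd : ∀ r ∈ Ioo (0:ℝ) 1, μ * u r / Lam * r ^ (k'-γ) ≤ deriv G r := by
      intro r hr
      have hr0 := hr.1
      have hrk : (0:ℝ) < r ^ k' := Real.rpow_pos_of_pos hr0 _
      have h2 := hP2 r hr (hneg r hr)
      have h3 : μ * u r * r ^ (-γ) / Lam ≤ -(deriv (deriv u) r) + k' * -(deriv u r) / r := by
        rw [div_le_iff₀ hLam]
        nlinarith [h2]
      have h4 := mul_le_mul_of_nonneg_left h3 hrk.le
      rw [(hG' r hr).deriv]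
      calc μ * u r / Lam * r ^ (k' - γ) = r ^ k' * (μ * u r * r ^ (-γ) / Lam) := by
            rw [show k' - γ = k' + (-γ) from by ring, Real.rpow_add hr0]; ring
        _ ≤ r ^ k' * (-(deriv (deriv u) r) + k' * -(deriv u r) / r) := h4
        _ = k' * r ^ (k'-1) * -(deriv u r) + r ^ k' * -(deriv (deriv u) r) := by
            rw [Real.rpow_sub_one hr0.ne']; field_simp; ring
    have hGd0 : ∀ r ∈ Ioo (0:ℝ) 1, 0 ≤ deriv G r := by
      intro r hr
      refine le_trans ?_ (hGd r hr)
      exact mul_nonneg (div_nonneg (mul_nonneg hμ.le (hpos r hr).le) hLam.le)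
        (Real.rpow_nonneg hr.1.le _)
    have hGmono : MonotoneOn G (Ioo (0:ℝ) 1) := by
      apply monotoneOn_of_deriv_nonneg (convex_Ioo _ _)
      · exact fun r hr => ((hG' r hr).differentiableAt.continuousAt).continuousWithinAt
      · rw [isOpen_Ioo.interior_eq]
        exact fun r hr => (hG' r hr).differentiableAt.differentiableWithinAt
      · rw [isOpen_Ioo.interior_eq]; exact fun r hr => hGd0 r hr
    set β : ℝ := k' + 1 - γ with hβdef
    have hβ1 : 1 ≤ β := by rw [hβdef]; linarith [hk'γ]
    have hβ0 : 0 < β := by linarith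
    set c6 : ℝ := μ / (2 * Lam * β) with hc6def
    have hc6 : 0 < c6 := by rw [hc6def]; exact div_pos hμ (by positivity)
    have hGda : ∀ x ∈ Ioo (0:ℝ) 1, HasDerivAt G (deriv G x) x :=
      fun x hx => (hG' x hx).differentiableAt.hasDerivAt
    have hii : ∀ t ∈ Ioo (0:ℝ) 1, c6 * u t * t ^ (1-γ) ≤ -(deriv u t) := by
      intro t ht
      have ht0 := ht.1
      have ht2 : t/2 ∈ Ioo (0:ℝ) 1 := ⟨by linarith, by linarith [ht.2]⟩
      have hsub : Icc (t/2) t ⊆ Ioo (0:ℝ) 1 :=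
        fun x hx => ⟨lt_of_lt_of_le ht2.1 hx.1, lt_of_le_of_lt hx.2 ht.2⟩
      have hH' : ∀ x ∈ Ioo (0:ℝ) 1, HasDerivAt (fun y => G y - μ * u t / Lam * (y ^ β / β))
          (deriv G x - μ * u t / Lam * (β * x ^ (β-1) / β)) x := by
        intro x hx
        exact (hGda x hx).sub
          (((Real.hasDerivAt_rpow_const (Or.inl hx.1.ne')).div_const β).const_mul (μ * u t / Lam))
      have hHm : MonotoneOn (fun y => G y - μ * u t / Lam * (y ^ β / β)) (Icc (t/2) t) := by
        apply monotoneOn_of_deriv_nonneg (convex_Icc _ _)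
        · exact fun x hx => ((hH' x (hsub hx)).differentiableAt.continuousAt).continuousWithinAt
        · rw [interior_Icc]
          exact fun x hx => (hH' x (hsub (Ioo_subset_Icc_self hx))).differentiableAt.differentiableWithinAt
        · rw [interior_Icc]
          intro x hx
          have hxI := hsub (Ioo_subset_Icc_self hx)
          rw [(hH' x hxI).deriv]
          have e1 : β * x ^ (β-1) / β = x ^ (k'-γ) := by
            rw [show β - 1 = k' - γ from by rw [hβdef]; ring, mul_comm, mul_div_assoc,
              div_self hβ0.ne', mul_one]
          rw [e1]
          have h2 := hGd x hxI
          have h3 : u t ≤ u x := huanti hxI ht hx.2.le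
          have hfac : (0:ℝ) ≤ μ / Lam * x ^ (k'-γ) :=
            mul_nonneg (div_nonneg hμ.le hLam.le) (Real.rpow_nonneg hxI.1.le _)
          have h4 : μ * u t / Lam * x ^ (k'-γ) ≤ μ * u x / Lam * x ^ (k'-γ) := by
            calc μ * u t / Lam * x ^ (k'-γ) = u t * (μ / Lam * x ^ (k'-γ)) := by ring
              _ ≤ u x * (μ / Lam * x ^ (k'-γ)) := mul_le_mul_of_nonneg_right h3 hfac
              _ = μ * u x / Lam * x ^ (k'-γ) := by ring
          linarith
      have hmem1 : t/2 ∈ Icc (t/2) t := left_mem_Icc.mpr (by linarith)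
      have hmem2 : t ∈ Icc (t/2) t := right_mem_Icc.mpr (by linarith)
      have h := hHm hmem1 hmem2 (by linarith)
      dsimp only at h
      have hG2 : 0 ≤ G (t/2) := by
        rw [hGdef]
        exact mul_nonneg (Real.rpow_nonneg (by linarith) _)
          (neg_nonneg.mpr (hneg _ ht2).le)
      have hhalf : (t/2) ^ β ≤ t ^ β / 2 := by
        rw [Real.div_rpow ht0.le (by norm_num : (0:ℝ) ≤ 2)]
        have h2b : (2:ℝ) ≤ 2 ^ β := by
          have := Real.rpow_le_rpow_of_exponent_le one_le_two hβ1
          rwa [Real.rpow_one] at this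
        rw [div_le_div_iff₀ (by positivity) (by norm_num : (0:ℝ) < 2)]
        exact mul_le_mul_of_nonneg_left h2b (Real.rpow_nonneg ht0.le _)
      have hcnn : 0 ≤ μ * u t / Lam := div_nonneg (mul_nonneg hμ.le (hpos t ht).le) hLam.le
      have h7' : (t/2) ^ β / β ≤ (t ^ β / 2) / β := by
        rw [div_eq_mul_inv, div_eq_mul_inv (t ^ β / 2)]
        exact mul_le_mul_of_nonneg_right hhalf (inv_nonneg.mpr hβ0.le)
      have h7 : μ * u t / Lam * ((t/2) ^ β / β) ≤ μ * u t / Lam * ((t ^ β / 2) / β) :=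
        mul_le_mul_of_nonneg_left h7' hcnn
      have e : c6 * u t * t ^ β = μ * u t / Lam * (t ^ β / β) - μ * u t / Lam * ((t ^ β / 2) / β) := by
        rw [hc6def]; field_simp; ring
      have hGt : c6 * u t * t ^ β ≤ G t := by linarith
      have hrk : (0:ℝ) < t ^ k' := Real.rpow_pos_of_pos ht0 _
      have e2 : t ^ k' * (c6 * u t * t ^ (1-γ)) = c6 * u t * t ^ β := by
        rw [show β = k' + (1-γ) from by rw [hβdef]; ring, Real.rpow_add ht0]; ring
      have h9 : t ^ k' * (c6 * u t * t ^ (1-γ)) ≤ t ^ k' * -(deriv u t) := by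
        rw [e2]; rw [hGdef] at hGt; exact hGt
      exact (mul_le_mul_iff_right₀ hrk).mp h9
    -- logarithmic lower bound
    set c7 : ℝ := c6 / (γ - 2) with hc7def
    have hc7 : 0 < c7 := by rw [hc7def]; exact div_pos hc6 (by linarith)
    have hg' : ∀ x ∈ Ioo (0:ℝ) 1, HasDerivAt (fun y => Real.log (u y) - c7 * y ^ (2-γ))
        (deriv u x / u x - c7 * ((2-γ) * x ^ (2-γ-1))) x := by
      intro x hx
      exact ((hu1 x hx).log (hpos x hx).ne').sub
        ((Real.hasDerivAt_rpow_const (Or.inl hx.1.ne')).const_mul c7)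
    have hganti : AntitoneOn (fun y => Real.log (u y) - c7 * y ^ (2-γ)) (Ioo (0:ℝ) 1) := by
      apply antitoneOn_of_deriv_nonpos (convex_Ioo _ _)
      · exact fun x hx => ((hg' x hx).differentiableAt.continuousAt).continuousWithinAt
      · rw [isOpen_Ioo.interior_eq]
        exact fun x hx => (hg' x hx).differentiableAt.differentiableWithinAt
      · rw [isOpen_Ioo.interior_eq]
        intro x hx
        rw [(hg' x hx).deriv]
        have h2 := hii x hx
        have hux := hpos x hx
        have hdiv : deriv u x / u x ≤ -(c6 * x ^ (1-γ)) := by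
          rw [div_le_iff₀ hux]
          nlinarith [h2]
        rw [show (2:ℝ)-γ-1 = 1-γ from by ring]
        have hγ2 : γ - (2:ℝ) ≠ 0 := ne_of_gt (by linarith)
        have e : c7 * ((2-γ) * x ^ (1-γ)) = -(c6 * x ^ (1-γ)) := by
          rw [hc7def]; field_simp; ring
        linarith
    set t0 : ℝ := 1/2 with ht0def
    have ht0I : t0 ∈ Ioo (0:ℝ) 1 := by rw [ht0def]; norm_num
    set Acst : ℝ := u t0 * Real.exp (-(c7 * t0 ^ (2-γ))) with hAdef
    have hA : 0 < Acst := by rw [hAdef]; exact mul_pos (hpos t0 ht0I) (Real.exp_pos _)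
    have hlb : ∀ s ∈ Ioo (0:ℝ) t0, Acst * Real.exp (c7 * s ^ (2-γ)) ≤ u s := by
      intro s hs
      have hsI : s ∈ Ioo (0:ℝ) 1 := ⟨hs.1, by
        have : t0 < 1 := ht0I.2
        linarith [hs.2]⟩
      have h := hganti hsI ht0I hs.2.le
      dsimp only at h
      have h2 : Real.log (u t0) + (c7 * s ^ (2-γ) - c7 * t0 ^ (2-γ)) ≤ Real.log (u s) := by
        linarith
      calc Acst * Real.exp (c7 * s ^ (2-γ))
          = Real.exp (Real.log (u t0) + (c7 * s ^ (2-γ) - c7 * t0 ^ (2-γ))) := by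
            rw [Real.exp_add, Real.exp_log (hpos t0 ht0I),
              show c7 * s ^ (2-γ) - c7 * t0 ^ (2-γ) = c7 * s ^ (2-γ) + -(c7 * t0 ^ (2-γ)) from by ring,
              Real.exp_add, hAdef]
            ring
        _ ≤ Real.exp (Real.log (u s)) := Real.exp_le_exp.mpr h2
        _ = u s := Real.exp_log (hpos s hsI)
    -- choice of n and final contradiction
    set n : ℕ := ⌈(β + 1) / (γ - 2)⌉₊ with hndef
    have hn1 : 1 ≤ n := by
      rw [hndef]
      exact Nat.one_le_ceil_iff.mpr (div_pos (by linarith) (by linarith))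
    have hn0R : (0:ℝ) < n := by exact_mod_cast hn1
    have hnb : β + 1 ≤ (n:ℝ) * (γ - 2) := by
      have h := Nat.le_ceil ((β + 1) / (γ - 2))
      rw [div_le_iff₀ (by linarith : (0:ℝ) < γ - 2)] at h
      rw [← hndef] at h
      exact h
    set εx : ℝ := (n:ℝ) * (γ - 2) - β with hεxdef
    have hεx : 1 ≤ εx := by rw [hεxdef]; linarith
    have hεx0 : (0:ℝ) < εx := by linarith
    have hGt0 : 0 < G t0 := by
      rw [hGdef]
      exact mul_pos (Real.rpow_pos_of_pos ht0I.1 _) (neg_pos.mpr (hneg t0 ht0I))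
    set Ccst : ℝ := c6 * Acst * (c7 / n) ^ n with hCdef
    have hC : 0 < Ccst := by
      rw [hCdef]
      exact mul_pos (mul_pos hc6 hA) (pow_pos (div_pos hc7 hn0R) n)
    have hmain : ∀ s ∈ Ioo (0:ℝ) t0, Ccst ≤ G t0 * s ^ εx := by
      intro s hs
      have hs0 := hs.1
      have hsI : s ∈ Ioo (0:ℝ) 1 := ⟨hs.1, by
        have : t0 < 1 := ht0I.2
        linarith [hs.2]⟩
      have h1 : G s ≤ G t0 := hGmono hsI ht0I hs.2.le
      have h2 := hii s hsI
      have h3 : s ^ k' * (c6 * u s * s ^ (1-γ)) ≤ G s := by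
        rw [hGdef]
        exact mul_le_mul_of_nonneg_left h2 (Real.rpow_pos_of_pos hs0 k').le
      have h4 : c6 * u s * s ^ β ≤ G t0 := by
        calc c6 * u s * s ^ β = s ^ k' * (c6 * u s * s ^ (1-γ)) := by
              rw [show β = k' + (1-γ) from by rw [hβdef]; ring, Real.rpow_add hs0]; ring
          _ ≤ G s := h3
          _ ≤ G t0 := h1
      have h5 : Acst * Real.exp (c7 * s ^ (2-γ)) ≤ u s := hlb s hs
      have h6 : (c7 * s ^ (2-γ) / n) ^ n ≤ Real.exp (c7 * s ^ (2-γ)) :=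
        exp_pow_aux n hn1 (by positivity)
      have hn0' : (n:ℝ) ≠ 0 := hn0R.ne'
      have h7 : (c7 * s ^ (2-γ) / n : ℝ) ^ n = (c7/n)^n * s ^ ((2-γ) * n) := by
        rw [div_pow, mul_pow, ← Real.rpow_natCast (s ^ (2-γ)) n, ← Real.rpow_mul hs0.le, div_pow]
        ring
      have h8 : s ^ ((2-γ) * (n:ℝ)) * s ^ β = s ^ (-εx) := by
        rw [← Real.rpow_add hs0, show (2-γ) * (n:ℝ) + β = -εx from by rw [hεxdef]; ring]
      have h6' : (c7/n)^n * s ^ ((2-γ) * (n:ℝ)) ≤ Real.exp (c7 * s ^ (2-γ)) := by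
        rw [← h7]; exact h6
      have h9 : Ccst * s ^ (-εx) ≤ G t0 := by
        calc Ccst * s ^ (-εx) = c6 * (Acst * ((c7/n)^n * s ^ ((2-γ) * (n:ℝ)))) * s ^ β := by
              rw [hCdef, ← h8]; ring
          _ ≤ c6 * (Acst * Real.exp (c7 * s ^ (2-γ))) * s ^ β :=
              mul_le_mul_of_nonneg_right
                (mul_le_mul_of_nonneg_left (mul_le_mul_of_nonneg_left h6' hA.le) hc6.le)
                (Real.rpow_nonneg hs0.le _)
          _ ≤ c6 * u s * s ^ β :=
              mul_le_mul_of_nonneg_right (mul_le_mul_of_nonneg_left h5 hc6.le)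
                (Real.rpow_nonneg hs0.le _)
          _ ≤ G t0 := h4
      have h10 : (0:ℝ) < s ^ εx := Real.rpow_pos_of_pos hs0 _
      rw [Real.rpow_neg hs0.le] at h9
      calc Ccst = Ccst * (s ^ εx)⁻¹ * s ^ εx := by field_simp
        _ ≤ G t0 * s ^ εx := mul_le_mul_of_nonneg_right h9 h10.le
    have hx1 : 0 < Ccst / (G t0 + Ccst) := div_pos hC (by linarith)
    set s0 : ℝ := min (1/4) ((Ccst / (G t0 + Ccst)) ^ εx⁻¹) with hs0def
    have hs00 : 0 < s0 := lt_min (by norm_num) (Real.rpow_pos_of_pos hx1 _)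
    have hs0le : s0 ≤ 1/4 := by rw [hs0def]; exact min_le_left _ _
    have hs0le2 : s0 ≤ (Ccst / (G t0 + Ccst)) ^ εx⁻¹ := by
      rw [hs0def]; exact min_le_right _ _
    have hs0t0 : s0 ∈ Ioo (0:ℝ) t0 := ⟨hs00, by rw [ht0def]; linarith⟩
    have h12 := hmain s0 hs0t0
    have h13 : s0 ^ εx ≤ Ccst / (G t0 + Ccst) := by
      calc s0 ^ εx ≤ ((Ccst / (G t0 + Ccst)) ^ εx⁻¹) ^ εx :=
            Real.rpow_le_rpow hs00.le hs0le2 hεx0.le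
        _ = Ccst / (G t0 + Ccst) := Real.rpow_inv_rpow hx1.le hεx0.ne'
    have hD : 0 < G t0 + Ccst := by linarith
    have h14 : Ccst ≤ G t0 * (Ccst/(G t0 + Ccst)) :=
      le_trans h12 (mul_le_mul_of_nonneg_left h13 hGt0.le)
    have h16 := mul_le_mul_of_nonneg_right h14 hD.le
    rw [mul_assoc (G t0) _ _, div_mul_cancel₀ _ hD.ne'] at h16
    nlinarith [mul_pos hC hC]

theorem stmt6 (N : ℕ) (hN : 2 ≤ N) (lam Lam : ℝ) (hlam : 0 < lam) (hlL : lam ≤ Lam)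
    (hNp : 2 < lam / Lam * ((N : ℝ) - 1) + 1)
    (F : Matrix (Fin N) (Fin N) ℝ → ℝ)
    (hF1 : UnifElliptic N lam Lam F) (hF2 : RotInvariant N F) (hF3 : PosHomog N F)
    (γ : ℝ) (hγ : 2 < γ) :
    radialEV N F γ = 0 ∧
    ∀ μ : ℝ, 0 < μ →
      ¬ ∃ u : ℝ → ℝ, ContDiffOn ℝ 2 u (Ioo 0 1) ∧
          (∀ r ∈ Ioo (0:ℝ) 1, 0 < u r) ∧
          (∀ r ∈ Ioo (0:ℝ) 1,
            F (Dmat N (deriv (deriv u) r) (deriv u r / r)) + μ * u r * r ^ (-γ) ≤ 0) := by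
  have key : ∀ μ : ℝ, 0 < μ →
      ¬ ∃ u : ℝ → ℝ, ContDiffOn ℝ 2 u (Ioo 0 1) ∧
          (∀ r ∈ Ioo (0:ℝ) 1, 0 < u r) ∧
          (∀ r ∈ Ioo (0:ℝ) 1,
            F (Dmat N (deriv (deriv u) r) (deriv u r / r)) + μ * u r * r ^ (-γ) ≤ 0) := by
    intro μ hμ h
    obtain ⟨u, hu, hpos, hineq⟩ := h
    exact noSuper N hN lam Lam hlam hlL F hF1 hF3 γ hγ μ hμ u hu hpos hineq
  refine ⟨?_, key⟩
  have hset : {μ : ℝ | ∃ u : ℝ → ℝ, ContDiffOn ℝ 2 u (Ioo 0 1) ∧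
      (∀ r ∈ Ioo (0:ℝ) 1, 0 < u r) ∧
      (∀ r ∈ Ioo (0:ℝ) 1,
        F (Dmat N (deriv (deriv u) r) (deriv u r / r)) + μ * u r * r ^ (-γ) ≤ 0)} = Iic 0 := by
    ext μ
    simp only [mem_setOf_eq, mem_Iic]
    constructor
    · intro h
      by_contra hμ'
      push_neg at hμ'
      exact key μ hμ' h
    · intro hμ
      refine ⟨fun _ => 1, contDiffOn_const, fun r hr => one_pos, fun r hr => ?_⟩
      simp only [deriv_const']
      rw [zero_div, Dmat_zero, F_zero hF3]
      have hrp : (0:ℝ) < r ^ (-γ) := Real.rpow_pos_of_pos hr.1 _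
      nlinarith [hrp, hμ]
  rw [radialEV, hset, csSup_Iic]


end
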